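/- The quaternionic exponential restricted to 𝒰_k = {q ∈ ℍ : kπ < |q_v| < (k+1)π} is surjective onto ℍ \ ℝ: for every non-real quaternion w and every k ∈ ℕ there exists q with kπ < |q_v| < (k+1)π and exp(q) = w. -/

import Mathlib

open Quaternion Real

theorem exp_surjOn_Uk (w : Quaternion ℝ) (hw : w.im ≠ 0) (k : ℕ) :
    ∃ q : Quaternion ℝ, k * Real.pi < ‖q.im‖ ∧ ‖q.im‖ < (k + 1) * Real.pi ∧
      NormedSpace.exp q = w := by
  have hwim : (0:ℝ) < ‖w.im‖ := norm_pos_iff.mpr hw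
  have hw0 : w ≠ 0 := fun h => hw (by simp [h])
  have hwn : (0:ℝ) < ‖w‖ := norm_pos_iff.mpr hw0
  -- ‖w‖² = w.re² + ‖w.im‖²
  have hsq : ‖w‖ ^ 2 = w.re ^ 2 + ‖w.im‖ ^ 2 := by
    have h1 : ‖w‖ ^ 2 = Quaternion.normSq w := by
      rw [sq, ← Quaternion.normSq_eq_norm_mul_self]
    have h2 : ‖w.im‖ ^ 2 = Quaternion.normSq w.im := by
      rw [sq, ← Quaternion.normSq_eq_norm_mul_self]
    rw [h1, h2, Quaternion.normSq_def', Quaternion.normSq_def']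
    simp
    ring
  have him_lt : ‖w.im‖ ≤ ‖w‖ := by nlinarith
  have hre_lt : |w.re| < ‖w‖ := by
    rw [abs_lt]; constructor <;> nlinarith
  set x : ℝ := w.re / ‖w‖ with hx
  have hx1 : -1 < x := by
    rw [hx, lt_div_iff₀ hwn]
    have := (abs_lt.mp hre_lt).1; linarith
  have hx2 : x < 1 := by
    rw [hx, div_lt_one hwn]
    exact (abs_lt.mp hre_lt).2
  set θ₀ := Real.arccos x with hθ₀
  have hθ₀_pos : 0 < θ₀ := Real.arccos_pos.mpr hx2
  have hθ₀_lt : θ₀ < π := by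
    rcases lt_or_eq_of_le (Real.arccos_le_pi x) with h | h
    · exact h
    · exact absurd (Real.arccos_eq_pi.mp h) (by linarith)
  have hcos₀ : Real.cos θ₀ = x := Real.cos_arccos hx1.le hx2.le
  have hsin₀ : Real.sin θ₀ = ‖w.im‖ / ‖w‖ := by
    rw [hθ₀, Real.sin_arccos]
    have : 1 - x ^ 2 = (‖w.im‖ / ‖w‖) ^ 2 := by
      have hxw : x * ‖w‖ = w.re := by rw [hx, div_mul_cancel₀ _ hwn.ne']
      field_simp [hx]
      linear_combination hsq - (x * ‖w‖ + w.re) * hxw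
    rw [this, Real.sqrt_sq (by positivity)]
  -- the adjusted angle
  set φ : ℝ := if Even k then π - θ₀ else θ₀ with hφ
  have hφ_pos : 0 < φ := by unfold φ; split <;> linarith
  have hφ_lt : φ < π := by unfold φ; split <;> linarith
  set θ : ℝ := (k + 1) * π - φ with hθ
  have hθ_lb : (k : ℝ) * π < θ := by
    have : ((k : ℝ) + 1) * π = k * π + π := by ring
    rw [hθ, this]; linarith
  have hθ_ub : θ < (k + 1) * π := by rw [hθ]; linarith
  have hθ_pos : 0 < θ := lt_of_le_of_lt (by positivity) hθ_lb
  have hcosθ : Real.cos θ = Real.cos θ₀ := by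
    have h := Real.cos_nat_mul_pi_sub φ (k + 1)
    push_cast at h
    rw [hθ, h, hφ]
    rcases Nat.even_or_odd k with he | ho
    · rw [if_pos he, Real.cos_pi_sub, (he.add_one).neg_one_pow]
      ring
    · rw [if_neg (Nat.not_even_iff_odd.mpr ho), (ho.add_one).neg_one_pow]
      ring
  have hsinθ : Real.sin θ = (-1 : ℝ) ^ k * Real.sin θ₀ := by
    have h := Real.sin_nat_mul_pi_sub φ (k + 1)
    push_cast at h
    rw [hθ, h, hφ]
    rcases Nat.even_or_odd k with he | ho
    · rw [if_pos he, Real.sin_pi_sub, (he.add_one).neg_one_pow, he.neg_one_pow]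
      ring
    · rw [if_neg (Nat.not_even_iff_odd.mpr ho), (ho.add_one).neg_one_pow, ho.neg_one_pow]
      ring
  -- the candidate quaternion
  set c : ℝ := θ * (-1 : ℝ) ^ k / ‖w.im‖ with hc
  set q : Quaternion ℝ := (Real.log ‖w‖ : Quaternion ℝ) + c • w.im with hq
  have hqim : q.im = c • w.im := by
    rw [hq]; simp
  have hqre : q.re = Real.log ‖w‖ := by
    rw [hq]; simp
  have hnormqim : ‖q.im‖ = θ := by
    rw [hqim, norm_smul, Real.norm_eq_abs, hc, abs_div, abs_mul, abs_pow, abs_neg, abs_one,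
      one_pow, mul_one, abs_of_pos hθ_pos, abs_of_pos hwim, div_mul_cancel₀ _ hwim.ne']
  refine ⟨q, by rw [hnormqim]; exact hθ_lb, by rw [hnormqim]; exact hθ_ub, ?_⟩
  rw [Quaternion.exp_eq, hqre, hnormqim, hqim, ← Real.exp_eq_exp_ℝ,
    Real.exp_log hwn]
  rw [hcosθ, hsinθ, hcos₀, hsin₀]
  rw [smul_smul]
  have hc' : (-1:ℝ) ^ k * (‖w.im‖ / ‖w‖) / θ * c = ‖w.im‖ / ‖w‖ / ‖w.im‖ := by
    rw [hc]
    have h4 : ((-1:ℝ)^k) * ((-1:ℝ)^k) = 1 := by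
      rw [← pow_add, ← two_mul, pow_mul]; norm_num
    have h5 : (-1:ℝ)^k * (‖w.im‖ / ‖w‖) / θ * (θ * (-1:ℝ)^k / ‖w.im‖)
        = ((-1:ℝ)^k * (-1:ℝ)^k) * (θ / θ) * (‖w.im‖ / ‖w‖ / ‖w.im‖) := by ring
    rw [h5, h4, div_self hθ_pos.ne', one_mul, one_mul]
  rw [hc', smul_add, smul_smul]
  have : ‖w‖ * (‖w.im‖ / ‖w‖ / ‖w.im‖) = 1 := by
    field_simp
  rw [this, one_smul]
  have hre : ‖w‖ • ((w.re / ‖w‖ : ℝ) : Quaternion ℝ) = ((w.re : ℝ) : Quaternion ℝ) := by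
    rw [← Quaternion.coe_smul, smul_eq_mul]
    congr 1
    field_simp
  rw [hre, Quaternion.re_add_im]
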